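/- Let f(x,y) = min(x², y³) on the region x, y ≥ 0 and consider the arc γ(t) = (t^{3/2}, t). Then ord_γ f = 3; moreover, for arcs γ_s(t) = (t^{3/2}(1+s), t) with small s > 0 one has ord f ∘ γ_s = 3 (via y³), while for small s < 0 one has ord f ∘ γ_s = 3 (via x²), but the contact orders realizing constant order 3 on the two sides differ: on the x²-side the zone of order 3 has size 1, and on the y³-side it has size 3/2. -/
import Mathlib


open Asymptotics Filter

def HasOrdC (f : ℝ → ℝ) (α a : ℝ) : Prop :=
  a ≠ 0 ∧ (fun t => f t - a * t ^ α) =o[nhdsWithin 0 (Set.Ioi 0)] fun t => t ^ α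

def HasOrd (f : ℝ → ℝ) (α : ℝ) : Prop := ∃ a, HasOrdC f α a

lemma ioo_mem : Set.Ioo (0:ℝ) 1 ∈ nhdsWithin 0 (Set.Ioi 0) :=
  Ioo_mem_nhdsGT_of_mem ⟨le_refl 0, by norm_num⟩

lemma hasOrd_of_ev (g : ℝ → ℝ) (α a : ℝ) (ha : a ≠ 0)
    (h : ∀ᶠ t in nhdsWithin 0 (Set.Ioi 0), g t = a * t ^ α) : HasOrd g α := by
  refine ⟨a, ha, ?_⟩
  rw [Asymptotics.isLittleO_iff]
  intro c hc
  filter_upwards [h] with t ht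
  rw [ht, sub_self]
  simp
  positivity

lemma pow_comp (t : ℝ) (ht : 0 ≤ t) : (t ^ ((3:ℝ)/2)) ^ 2 = t ^ (3:ℝ) := by
  rw [← Real.rpow_natCast (t ^ ((3:ℝ)/2)) 2, ← Real.rpow_mul ht]
  norm_num

lemma cube (t : ℝ) : t ^ 3 = t ^ (3:ℝ) := by
  rw [← Real.rpow_natCast t 3]; norm_num

lemma little : (fun t : ℝ => t ^ ((3:ℝ)/2)) =o[nhdsWithin 0 (Set.Ioi 0)]
    fun t => t ^ (1:ℝ) := by
  rw [Asymptotics.isLittleO_iff]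
  intro c hc
  have hm : Set.Ioo (0:ℝ) (min (c^2) 1) ∈ nhdsWithin 0 (Set.Ioi 0) :=
    Ioo_mem_nhdsGT_of_mem ⟨le_refl 0, lt_min (by positivity) one_pos⟩
  filter_upwards [hm] with t ht
  obtain ⟨ht0, ht1⟩ := ht
  have h12 : t ^ ((1:ℝ)/2) ≤ c := by
    calc t ^ ((1:ℝ)/2) ≤ (c^2) ^ ((1:ℝ)/2) :=
          Real.rpow_le_rpow ht0.le (le_of_lt (lt_of_lt_of_le ht1 (min_le_left _ _))) (by norm_num)
      _ = c := by
          rw [← Real.rpow_natCast c 2, ← Real.rpow_mul hc.le]; norm_num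
  have hsplit : t ^ ((3:ℝ)/2) = t ^ ((1:ℝ)/2) * t ^ (1:ℝ) := by
    rw [← Real.rpow_add ht0]; norm_num
  rw [Real.norm_eq_abs, Real.norm_eq_abs, abs_of_nonneg (Real.rpow_nonneg ht0.le _),
    abs_of_nonneg (Real.rpow_nonneg ht0.le _), hsplit]
  have : (0:ℝ) ≤ t ^ (1:ℝ) := Real.rpow_nonneg ht0.le _
  calc t ^ ((1:ℝ)/2) * t ^ (1:ℝ) ≤ c * t ^ (1:ℝ) := by
        apply mul_le_mul_of_nonneg_right h12 this
    _ = c * t ^ (1:ℝ) := rfl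

theorem stmt13 (f : ℝ → ℝ → ℝ)
    (hf : ∀ x y : ℝ, 0 ≤ x → 0 ≤ y → f x y = min (x ^ 2) (y ^ 3)) :
    -- ord of f along γ(t) = (t^{3/2}, t) is 3
    HasOrd (fun t => f (t ^ ((3:ℝ)/2)) t) 3 ∧
    -- for small s > 0 (arc on the y³-side) the order is still 3
    (∃ ε > (0:ℝ), ∀ s : ℝ, 0 < s → s < ε →
      HasOrd (fun t => f (t ^ ((3:ℝ)/2) * (1 + s)) t) 3) ∧
    -- for small s < 0 (arc on the x²-side) the order is still 3
    (∃ ε > (0:ℝ), ∀ s : ℝ, -ε < s → s < 0 →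
      HasOrd (fun t => f (t ^ ((3:ℝ)/2) * (1 + s)) t) 3) ∧
    -- on the x²-side the zone of order 3 has size 1: the arc (t,t) also has
    -- order 3 but contact of order 1 with γ
    HasOrd (fun t => f t t) 3 ∧
    HasOrd (fun t => ‖((t, t) : ℝ × ℝ) - (t ^ ((3:ℝ)/2), t)‖) 1 ∧
    -- on the y³-side the zone of order 3 has size 3/2: the deformed arcs have
    -- contact of order 3/2 with γ
    (∀ s : ℝ, s ≠ 0 →
      HasOrd (fun t => ‖((t ^ ((3:ℝ)/2) * (1 + s), t) : ℝ × ℝ) -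
        (t ^ ((3:ℝ)/2), t)‖) ((3:ℝ)/2)) := by
  refine ⟨?_, ?_, ?_, ?_, ?_, ?_⟩
  · apply hasOrd_of_ev _ _ 1 one_ne_zero
    filter_upwards [ioo_mem] with t ht
    have ht0 := ht.1
    rw [hf _ _ (Real.rpow_nonneg ht0.le _) ht0.le, pow_comp t ht0.le, cube, min_self, one_mul]
  · refine ⟨1, one_pos, fun s hs0 hs1 => ?_⟩
    apply hasOrd_of_ev _ _ 1 one_ne_zero
    filter_upwards [ioo_mem] with t ht
    have ht0 := ht.1
    have hx : (0:ℝ) ≤ t ^ ((3:ℝ)/2) * (1 + s) := by positivity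
    rw [hf _ _ hx ht0.le, mul_pow, pow_comp t ht0.le, cube, one_mul]
    rw [min_eq_right]
    apply le_mul_of_one_le_right (Real.rpow_nonneg ht0.le _)
    nlinarith
  · refine ⟨1, one_pos, fun s hs0 hs1 => ?_⟩
    have h1s : (0:ℝ) < 1 + s := by linarith
    apply hasOrd_of_ev _ _ ((1+s)^2) (by positivity)
    filter_upwards [ioo_mem] with t ht
    have ht0 := ht.1
    have hx : (0:ℝ) ≤ t ^ ((3:ℝ)/2) * (1 + s) := by positivity
    rw [hf _ _ hx ht0.le, mul_pow, pow_comp t ht0.le, cube]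
    rw [min_eq_left, mul_comm]
    apply mul_le_of_le_one_right (Real.rpow_nonneg ht0.le _)
    nlinarith
  · apply hasOrd_of_ev _ _ 1 one_ne_zero
    filter_upwards [ioo_mem] with t ht
    obtain ⟨ht0, ht1⟩ := ht
    rw [hf _ _ ht0.le ht0.le, one_mul, ← cube, min_eq_right]
    calc t ^ 3 = t^2 * t := by ring
      _ ≤ t^2 * 1 := by nlinarith
      _ = t^2 := by ring
  · refine ⟨1, one_ne_zero, ?_⟩
    have heq : (fun t : ℝ => ‖((t, t) : ℝ × ℝ) - (t ^ ((3:ℝ)/2), t)‖ - 1 * t ^ (1:ℝ))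
        =ᶠ[nhdsWithin 0 (Set.Ioi 0)] fun t => -(t ^ ((3:ℝ)/2)) := by
      filter_upwards [ioo_mem] with t ht
      obtain ⟨ht0, ht1⟩ := ht
      have hle : t ^ ((3:ℝ)/2) ≤ t := by
        calc t ^ ((3:ℝ)/2) ≤ t ^ (1:ℝ) :=
              Real.rpow_le_rpow_of_exponent_ge ht0 ht1.le (by norm_num)
          _ = t := Real.rpow_one t
      have : ((t, t) : ℝ × ℝ) - (t ^ ((3:ℝ)/2), t) = (t - t ^ ((3:ℝ)/2), 0) := by
        simp [Prod.ext_iff]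
      rw [this, Prod.norm_def, norm_zero, Real.norm_eq_abs,
        max_eq_left (abs_nonneg _), abs_of_nonneg (by linarith), Real.rpow_one, one_mul]
      ring
    exact heq.trans_isLittleO little.neg_left
  · intro s hs
    apply hasOrd_of_ev _ _ |s| (abs_ne_zero.mpr hs)
    filter_upwards [ioo_mem] with t ht
    have ht0 := ht.1
    have : ((t ^ ((3:ℝ)/2) * (1 + s), t) : ℝ × ℝ) - (t ^ ((3:ℝ)/2), t)
        = (t ^ ((3:ℝ)/2) * s, 0) := by
      simp [Prod.ext_iff]; ring
    rw [this, Prod.norm_def]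
    simp only [norm_zero, Real.norm_eq_abs]
    rw [abs_mul, abs_of_nonneg (Real.rpow_nonneg ht0.le _)]
    simp [mul_comm]
    positivity
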